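/- Let 𝒰 be a universe and (X, L, s) a 𝒰-counting system. Then the relation ≤_L is transitive, and moreover x ≤_s y and y ≤_L z together imply x ≤_L z, for all x, y, z ∈ X. -/

import Mathlib

namespace Paper

/-- The union `⋃_{i ∈ I} f(i)` of the values of `f` on elements of `I`. -/
noncomputable def unionImage (f : ZFSet → ZFSet) (I : ZFSet) : ZFSet :=
  ZFSet.sUnion (@ZFSet.image f (Classical.allZFSetDefinable _) I)

/-- A universe: a transitive set closed under pairing and under unions of
`𝒰`-indexed families of elements of `𝒰`. -/
def IsUniverse (U : ZFSet) : Prop :=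
  U.IsTransitive ∧
  (∀ x ∈ U, ∀ y ∈ U, ({x, y} : ZFSet) ∈ U) ∧
  (∀ I ∈ U, ∀ f : ZFSet → ZFSet, (∀ i ∈ I, f i ∈ U) → unionImage f I ∈ U)

variable {X : Type*}

/-- `A ∈ P_𝒰(X)`: the subset `A` of the type `X` is in bijection with some element of `𝒰`. -/
def SmallSet (U : ZFSet) (A : Set X) : Prop :=
  ∃ B : ZFSet, B ∈ U ∧ Nonempty (A ≃ B.toSet)

/-- `x < y` in the sense `x ≤ y ∧ x ≠ y`, for an arbitrary relation `le`. -/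
def ltR (le : X → X → Prop) (x y : X) : Prop := le x y ∧ x ≠ y

/-- The lower complement `S^↧ = {x | ∀ y ∈ S, x < y}`. -/
def lowerComp (le : X → X → Prop) (S : Set X) : Set X := {x | ∀ y ∈ S, ltR le x y}

/-- The upper complement `S^↑ = {x | ∀ y ∈ S, y < x}`. -/
def upperComp (le : X → X → Prop) (S : Set X) : Set X := {x | ∀ y ∈ S, ltR le y x}

/-- `b` is the incremented join `⋁⁺S`, i.e. the minimum of `S^↑`. -/
def IsIncJoin (le : X → X → Prop) (S : Set X) (b : X) : Prop :=
  b ∈ upperComp le S ∧ ∀ c ∈ upperComp le S, le b c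

/-- `b = x⁺`, i.e. `b = ⋁⁺{x}`. -/
def IsSuccOf (le : X → X → Prop) (x b : X) : Prop := IsIncJoin le {x} b

/-- `b` is the join (least upper bound) of `S`. -/
def IsJoin (le : X → X → Prop) (S : Set X) (b : X) : Prop :=
  (∀ y ∈ S, le y b) ∧ ∀ c, (∀ y ∈ S, le y c) → le b c

/-- An ordinal system relative to the universe `U`: a partial order satisfying
(O1) lower complements of nonempty subsets lie in `P_𝒰(X)`, and
(O2) every member of `P_𝒰(X)` has an incremented join. -/
def IsOrdinalSystem (U : ZFSet) (le : X → X → Prop) : Prop :=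
  IsPartialOrder X le ∧
  (∀ S : Set X, S.Nonempty → SmallSet U (lowerComp le S)) ∧
  (∀ S : Set X, SmallSet U S → ∃ b, IsIncJoin le S b)

/-- `I` is successor-closed: `s(I) ⊆ I`. -/
def SuccClosed (s : X → X) (I : Set X) : Prop := ∀ x ∈ I, s x ∈ I

/-- The domain of the limit function of a `𝒰`-counting system (axiom (C1)):
the successor-closed members of `P_𝒰(X)`. -/
def LDom (U : ZFSet) (s : X → X) : Set (Set X) :=
  {I | SuccClosed s I ∧ SmallSet U I}

/-- A subset `J` is closed when `s⁻¹(J) ⊆ J` and `A ⊆ J` whenever `L(A) ∈ J`. -/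
def IsClosedSub (U : ZFSet) (s : X → X) (L : ∀ I ∈ LDom U s, X) (J : Set X) : Prop :=
  (∀ x : X, s x ∈ J → x ∈ J) ∧
  (∀ A (h : A ∈ LDom U s), L A h ∈ J → A ⊆ J)

/-- The closure `Ī` of `I` in the topology of closed subsets: the intersection
of all closed subsets containing `I`. -/
def cl (U : ZFSet) (s : X → X) (L : ∀ I ∈ LDom U s, X) (I : Set X) : Set X :=
  {x | ∀ J : Set X, IsClosedSub U s L J → I ⊆ J → x ∈ J}

/-- `x ≤_s y`: `s^m(x) = y` for some `m ∈ ℕ`. -/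
def leS (s : X → X) (x y : X) : Prop := ∃ m : ℕ, s^[m] x = y

/-- `x ≤_L y`: `x ∈ I` and `L(I) = y` for some `I ∈ dom L`. -/
def leL (U : ZFSet) (s : X → X) (L : ∀ I ∈ LDom U s, X) (x y : X) : Prop :=
  ∃ I, ∃ h : I ∈ LDom U s, x ∈ I ∧ L I h = y

/-- The specialization preorder: `x ≤ y` iff `x ∈ cl {y}`. -/
def leSpec (U : ZFSet) (s : X → X) (L : ∀ I ∈ LDom U s, X) (x y : X) : Prop :=
  x ∈ cl U s L {y}

/-- Axiom (C2): the limit function only depends on the closure of its argument. -/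
def C2 (U : ZFSet) (s : X → X) (L : ∀ I ∈ LDom U s, X) : Prop :=
  ∀ I J (hI : I ∈ LDom U s) (hJ : J ∈ LDom U s),
    cl U s L I = cl U s L J → L I hI = L J hJ

/-- Axiom (C3): `s⁻¹{L(I)} = ∅` and `s(L(I)) ∉ I` for all `I ∈ dom L`. -/
def C3 (U : ZFSet) (s : X → X) (L : ∀ I ∈ LDom U s, X) : Prop :=
  ∀ I (h : I ∈ LDom U s), (∀ x : X, s x ≠ L I h) ∧ s (L I h) ∉ I

/-- Axiom (C4): `s` is injective, and `L(I) = L(J)` implies `Ī = J̄`. -/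
def C4 (U : ZFSet) (s : X → X) (L : ∀ I ∈ LDom U s, X) : Prop :=
  Function.Injective s ∧
  ∀ I J (hI : I ∈ LDom U s) (hJ : J ∈ LDom U s),
    L I hI = L J hJ → cl U s L I = cl U s L J

/-- Axiom (C5): the induction axiom. -/
def C5 (U : ZFSet) (s : X → X) (L : ∀ I ∈ LDom U s, X) : Prop :=
  ∀ J : Set X, SuccClosed s J →
    (∀ I (h : I ∈ LDom U s), I ⊆ J → L I h ∈ J) → J = Set.univ



variable {U : ZFSet}

lemma mem_unionImage {f : ZFSet → ZFSet} {I z : ZFSet} :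
    z ∈ unionImage f I ↔ ∃ i ∈ I, z ∈ f i := by
  simp only [unionImage, ZFSet.mem_sUnion, ZFSet.mem_image]
  constructor
  · rintro ⟨w, ⟨i, hi, rfl⟩, hz⟩; exact ⟨i, hi, hz⟩
  · rintro ⟨i, hi, hz⟩; exact ⟨f i, ⟨i, hi, rfl⟩, hz⟩

lemma empty_mem_univ (hU : IsUniverse U) {B : ZFSet} (hB : B ∈ U) : (∅ : ZFSet) ∈ U := by
  have hne : U ≠ ∅ := by
    intro h; rw [h] at hB; exact (ZFSet.notMem_empty B) hB
  obtain ⟨y, hy, hdis⟩ := ZFSet.regularity U hne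
  have : y = ∅ := by
    by_contra hy0
    obtain ⟨z, hz⟩ := ZFSet.regularity y hy0
    have hzy : z ∈ y := hz.1
    have hzU : z ∈ U := hU.1 y hy hzy
    have : z ∈ U ∩ y := ZFSet.mem_inter.2 ⟨hzU, hzy⟩
    rw [hdis] at this; exact ZFSet.notMem_empty z this
  rwa [this] at hy

lemma sing_mem_univ (hU : IsUniverse U) {b : ZFSet} (hb : b ∈ U) : ({b} : ZFSet) ∈ U := by
  have := hU.2.1 b hb b hb
  simpa using this

lemma pair_mem_univ (hU : IsUniverse U) {b c : ZFSet} (hb : b ∈ U) (hc : c ∈ U) :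
    ZFSet.pair b c ∈ U := by
  have h1 : ({b} : ZFSet) ∈ U := sing_mem_univ hU hb
  have h2 : ({b, c} : ZFSet) ∈ U := hU.2.1 b hb c hc
  exact hU.2.1 _ h1 _ h2

lemma unionImage_mem_univ (hU : IsUniverse U) {I : ZFSet} (hI : I ∈ U)
    {f : ZFSet → ZFSet} (hf : ∀ i ∈ I, f i ∈ U) : unionImage f I ∈ U :=
  hU.2.2 I hI f hf

lemma image_mem_univ (hU : IsUniverse U) {B : ZFSet} (hB : B ∈ U)
    (f : ZFSet → ZFSet) [ZFSet.Definable₁ f] (hf : ∀ b ∈ B, f b ∈ U) :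
    ZFSet.image f B ∈ U := by
  have : ZFSet.image f B
      = unionImage (fun b => ({f b} : ZFSet)) B := by
    apply ZFSet.ext; intro z
    rw [mem_unionImage, ZFSet.mem_image]
    constructor
    · rintro ⟨b, hb, rfl⟩; exact ⟨b, hb, by simp⟩
    · rintro ⟨b, hb, hz⟩; simp at hz; exact ⟨b, hb, hz.symm⟩
  rw [this]
  exact unionImage_mem_univ hU hB fun b hb => sing_mem_univ hU (hf b hb)

lemma union_mem_univ (hU : IsUniverse U) {B C : ZFSet} (hB : B ∈ U) (hC : C ∈ U) :
    B ∪ C ∈ U := by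
  classical
  have h0 : (∅ : ZFSet) ∈ U := empty_mem_univ hU hB
  have h1 : ({∅} : ZFSet) ∈ U := sing_mem_univ hU h0
  have hp : ({∅, {∅}} : ZFSet) ∈ U := hU.2.1 _ h0 _ h1
  have : B ∪ C = unionImage (fun t => if t = ∅ then B else C) ({∅, {∅}} : ZFSet) := by
    apply ZFSet.ext; intro z
    rw [mem_unionImage, ZFSet.mem_union]
    constructor
    · rintro (hz | hz)
      · exact ⟨∅, by simp, by rw [if_pos rfl]; exact hz⟩
      · refine ⟨{∅}, by simp, ?_⟩
        have : ({∅} : ZFSet) ≠ ∅ := by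
          intro h
          have : (∅ : ZFSet) ∈ ({∅} : ZFSet) := by simp
          rw [h] at this; exact ZFSet.notMem_empty _ this
        rw [if_neg this]; exact hz
    · rintro ⟨i, hi, hz⟩
      simp at hi
      rcases hi with rfl | rfl
      · left; rwa [if_pos rfl] at hz
      · right
        have : ({∅} : ZFSet) ≠ ∅ := by
          intro h
          have : (∅ : ZFSet) ∈ ({∅} : ZFSet) := by simp
          rw [h] at this; exact ZFSet.notMem_empty _ this
        rwa [if_neg this] at hz
  rw [this]
  exact unionImage_mem_univ hU hp (by intro i hi; split <;> assumption)

/-- natural numbers as ZF ordinals -/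
def natZ : ℕ → ZFSet
  | 0 => ∅
  | n+1 => insert (natZ n) (natZ n)

lemma mem_natZ {z : ZFSet} {n : ℕ} : z ∈ natZ n ↔ ∃ k < n, z = natZ k := by
  induction n with
  | zero => simp [natZ]
  | succ n ih =>
    simp only [natZ, ZFSet.mem_insert_iff, ih]
    constructor
    · rintro (rfl | ⟨k, hk, rfl⟩)
      · exact ⟨n, Nat.lt_succ_self n, rfl⟩
      · exact ⟨k, Nat.lt_succ_of_lt hk, rfl⟩
    · rintro ⟨k, hk, rfl⟩
      rcases Nat.lt_succ_iff_lt_or_eq.1 hk with h | rfl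
      · exact Or.inr ⟨k, h, rfl⟩
      · exact Or.inl rfl

lemma natZ_mem_natZ {k n : ℕ} (h : k < n) : natZ k ∈ natZ n :=
  mem_natZ.2 ⟨k, h, rfl⟩

lemma natZ_injective : Function.Injective natZ := by
  intro m n h
  by_contra hne
  rcases Nat.lt_or_ge m n with hlt | hge
  · have hm := natZ_mem_natZ hlt
    rw [h] at hm
    exact ZFSet.mem_irrefl _ hm
  · have hlt : n < m := lt_of_le_of_ne hge (Ne.symm hne)
    have hm := natZ_mem_natZ hlt
    rw [h] at hm
    exact ZFSet.mem_irrefl _ hm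

lemma natZ_mem_univ (hU : IsUniverse U) {B : ZFSet} (hB : B ∈ U) (n : ℕ) : natZ n ∈ U := by
  induction n with
  | zero => exact empty_mem_univ hU hB
  | succ n ih =>
    have : natZ (n+1) = {natZ n} ∪ natZ n := by
      apply ZFSet.ext; intro z; simp [natZ]
    rw [this]
    exact union_mem_univ hU (sing_mem_univ hU ih) ih

lemma small_of_inj (hU : IsUniverse U) {A : Set X} {B : ZFSet} (hB : B ∈ U)
    (ι : X → ZFSet) (hmem : ∀ a ∈ A, ι a ∈ B)
    (hinj : ∀ a ∈ A, ∀ a' ∈ A, ι a = ι a' → a = a') : SmallSet U A := by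
  classical
  set g : A → ZFSet := fun a => ι a.1 with hg
  have hginj : Function.Injective g := fun a a' h => Subtype.ext (hinj _ a.2 _ a'.2 h)
  set T : Set ZFSet := Set.range g with hT
  set B' : ZFSet := unionImage (fun b => if b ∈ T then ({b} : ZFSet) else ∅) B with hB'def
  have hB' : B' ∈ U := by
    apply unionImage_mem_univ hU hB
    intro b hb; split
    · exact sing_mem_univ hU (hU.1 B hB hb)
    · exact empty_mem_univ hU hB
  have hTB : B'.toSet = T := by
    ext z
    rw [show z ∈ B'.toSet ↔ z ∈ B' from Iff.rfl, hB'def, mem_unionImage]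
    constructor
    · rintro ⟨b, hb, hz⟩
      by_cases h : b ∈ T
      · rw [if_pos h] at hz
        rw [ZFSet.mem_singleton] at hz
        subst hz; exact h
      · rw [if_neg h] at hz; exact absurd hz (ZFSet.notMem_empty z)
    · intro hz
      obtain ⟨a, rfl⟩ := hz
      refine ⟨g a, hmem _ a.2, ?_⟩
      rw [if_pos ⟨a, rfl⟩, ZFSet.mem_singleton]
  exact ⟨B', hB', ⟨(Equiv.ofInjective g hginj).trans (Equiv.setCongr hTB.symm)⟩⟩

lemma empty_ne_sing : (∅ : ZFSet) ≠ ({∅} : ZFSet) := by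
  intro h
  have : (∅ : ZFSet) ∈ ({∅} : ZFSet) := by simp
  rw [← h] at this
  exact ZFSet.notMem_empty _ this

lemma small_union (hU : IsUniverse U) {A A' : Set X}
    (hA : SmallSet U A) (hA' : SmallSet U A') : SmallSet U (A ∪ A') := by
  classical
  obtain ⟨B, hB, ⟨e⟩⟩ := hA
  obtain ⟨C, hC, ⟨e'⟩⟩ := hA'
  haveI : ZFSet.Definable₁ (fun b => ZFSet.pair b ∅) := Classical.allZFSetDefinable _
  haveI : ZFSet.Definable₁ (fun b => ZFSet.pair b ({∅} : ZFSet)) := Classical.allZFSetDefinable _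
  have h0 : (∅ : ZFSet) ∈ U := empty_mem_univ hU hB
  have h1 : ({∅} : ZFSet) ∈ U := sing_mem_univ hU h0
  set D : ZFSet := ZFSet.image (fun b => ZFSet.pair b ∅) B ∪
      ZFSet.image (fun b => ZFSet.pair b ({∅} : ZFSet)) C with hD
  have hDU : D ∈ U := by
    apply union_mem_univ hU
    · exact image_mem_univ hU hB _ fun b hb => pair_mem_univ hU (hU.1 B hB hb) h0
    · exact image_mem_univ hU hC _ fun b hb => pair_mem_univ hU (hU.1 C hC hb) h1
  set ι : X → ZFSet := fun a =>
    if h : a ∈ A then ZFSet.pair (e ⟨a, h⟩) ∅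
    else if h' : a ∈ A' then ZFSet.pair (e' ⟨a, h'⟩) ({∅} : ZFSet) else ∅ with hι
  apply small_of_inj hU hDU ι
  · rintro a (ha | ha)
    · rw [hι]; dsimp only; rw [dif_pos ha, ZFSet.mem_union]
      left
      rw [ZFSet.mem_image]
      exact ⟨_, (e ⟨a, ha⟩).2, rfl⟩
    · rw [hι]; dsimp only
      by_cases h : a ∈ A
      · rw [dif_pos h, ZFSet.mem_union]
        left
        rw [ZFSet.mem_image]
        exact ⟨_, (e ⟨a, h⟩).2, rfl⟩
      · rw [dif_neg h, dif_pos ha, ZFSet.mem_union]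
        right
        rw [ZFSet.mem_image]
        exact ⟨_, (e' ⟨a, ha⟩).2, rfl⟩
  · intro a ha a' ha' heq
    rw [hι] at heq; dsimp only at heq
    by_cases h : a ∈ A <;> by_cases h' : a' ∈ A
    · rw [dif_pos h, dif_pos h'] at heq
      obtain ⟨h1', _⟩ := ZFSet.pair_injective heq
      have := e.injective (Subtype.ext h1')
      exact congrArg Subtype.val this
    · have ha'2 : a' ∈ A' := ha'.resolve_left h'
      rw [dif_pos h, dif_neg h', dif_pos ha'2] at heq
      exact absurd (ZFSet.pair_injective heq).2 empty_ne_sing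
    · have ha2 : a ∈ A' := ha.resolve_left h
      rw [dif_neg h, dif_pos ha2, dif_pos h'] at heq
      exact absurd (ZFSet.pair_injective heq).2 empty_ne_sing.symm
    · have ha2 : a ∈ A' := ha.resolve_left h
      have ha'2 : a' ∈ A' := ha'.resolve_left h'
      rw [dif_neg h, dif_pos ha2, dif_neg h', dif_pos ha'2] at heq
      obtain ⟨h1', _⟩ := ZFSet.pair_injective heq
      have := e'.injective (Subtype.ext h1')
      exact congrArg Subtype.val this

lemma succClosed_iterate {s : X → X} {J : Set X} (hJ : SuccClosed s J)
    {y : X} (hy : y ∈ J) (j : ℕ) : s^[j] y ∈ J := by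
  induction j with
  | zero => exact hy
  | succ j ih => rw [Function.iterate_succ_apply']; exact hJ _ ih

lemma iter_desc {s : X → X} {K : Set X} (hK : ∀ w : X, s w ∈ K → w ∈ K) {x : X} :
    ∀ d k : ℕ, s^[k + d] x ∈ K → s^[k] x ∈ K := by
  intro d
  induction d with
  | zero => intro k h; exact h
  | succ d ih =>
    intro k h
    have : s^[(k + 1) + d] x ∈ K := by
      rw [show (k + 1) + d = k + (d + 1) by omega] at *; exact h
    have h1 := ih (k + 1) this
    apply hK
    rwa [Function.iterate_succ_apply'] at h1

lemma cl_union_left_eq {s : X → X} {L : ∀ I ∈ LDom U s, X} {I J : Set X}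
    (hsub : ∀ K : Set X, IsClosedSub U s L K → J ⊆ K → I ⊆ K) :
    cl U s L (I ∪ J) = cl U s L J := by
  ext x
  constructor
  · intro hx K hK hJK
    exact hx K hK (Set.union_subset (hsub K hK hJK) hJK)
  · intro hx K hK hIJK
    exact hx K hK (Set.subset_union_right.trans hIJK)

theorem stmt_16 (U : ZFSet) (hU : IsUniverse U) {X : Type*}
    (s : X → X) (L : ∀ I ∈ LDom U s, X) (hC2 : C2 U s L) :
    (∀ x y z : X, leL U s L x y → leL U s L y z → leL U s L x z) ∧
    (∀ x y z : X, leS s x y → leL U s L y z → leL U s L x z) := by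
  classical
  constructor
  · rintro x y z ⟨I, hI, hxI, hLI⟩ ⟨J, hJ, hyJ, hLJ⟩
    have hK : I ∪ J ∈ LDom U s := by
      constructor
      · rintro a (ha | ha)
        · exact Or.inl (hI.1 a ha)
        · exact Or.inr (hJ.1 a ha)
      · exact small_union hU hI.2 hJ.2
    have hcl : cl U s L (I ∪ J) = cl U s L J := by
      apply cl_union_left_eq
      intro K hK' hJK
      apply hK'.2 I hI
      apply hJK
      rw [hLI]; exact hyJ
    refine ⟨I ∪ J, hK, Or.inl hxI, ?_⟩
    rw [hC2 (I ∪ J) J hK hJ hcl]; exact hLJ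
  · rintro x y z ⟨m, hm⟩ ⟨J, hJ, hyJ, hLJ⟩
    obtain ⟨B, hB, -⟩ := hJ.2
    set O : Set X := {a | ∃ k : ℕ, s^[k] x = a} with hO
    have hOJsucc : SuccClosed s (O ∪ J) := by
      rintro a (⟨k, rfl⟩ | ha)
      · exact Or.inl ⟨k + 1, Function.iterate_succ_apply' s k x⟩
      · exact Or.inr (hJ.1 a ha)
    have hODsmall : SmallSet U (O \ J) := by
      apply small_of_inj hU (natZ_mem_univ hU hB m)
        (fun a => if h : ∃ k : ℕ, s^[k] x = a then natZ (Nat.find h) else ∅)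
      · rintro a ⟨ha, haJ⟩
        have ha : ∃ k : ℕ, s^[k] x = a := ha
        rw [dif_pos ha]
        apply natZ_mem_natZ
        by_contra hge
        push_neg at hge
        have : s^[(Nat.find ha - m) + m] x = a := by
          rw [show (Nat.find ha - m) + m = Nat.find ha by omega]
          exact Nat.find_spec ha
        rw [Function.iterate_add_apply, hm] at this
        exact haJ (this ▸ succClosed_iterate hJ.1 hyJ _)
      · rintro a ⟨ha, -⟩ a' ⟨ha', -⟩ heq
        have ha : ∃ k : ℕ, s^[k] x = a := ha
        have ha' : ∃ k : ℕ, s^[k] x = a' := ha'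
        rw [dif_pos ha, dif_pos ha'] at heq
        have := natZ_injective heq
        rw [← Nat.find_spec ha, ← Nat.find_spec ha', this]
    have hK : O ∪ J ∈ LDom U s := by
      refine ⟨hOJsucc, ?_⟩
      have : O ∪ J = (O \ J) ∪ J := by
        ext a; by_cases h : a ∈ J <;> simp [h]
      rw [this]
      exact small_union hU hODsmall hJ.2
    have hcl : cl U s L (O ∪ J) = cl U s L J := by
      apply cl_union_left_eq
      intro K hK' hJK
      rintro a ⟨k, rfl⟩
      rcases Nat.lt_or_ge k m with hlt | hge
      · apply iter_desc hK'.1 (m - k) k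
        rw [show k + (m - k) = m by omega, hm]
        exact hJK hyJ
      · have : s^[(k - m) + m] x = s^[k] x := by rw [show (k - m) + m = k by omega]
        rw [← this, Function.iterate_add_apply, hm]
        exact hJK (succClosed_iterate hJ.1 hyJ _)
    refine ⟨O ∪ J, hK, Or.inl ⟨0, rfl⟩, ?_⟩
    rw [hC2 (O ∪ J) J hK hJ hcl]; exact hLJ

end Paper
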